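/- Let C be a finite multiset of instance values with P(C) ≥ 1 and N(C) ≥ 1. Define b_ROCAUC(C) = 1 if for all (y, ŷ), (y', ŷ') in C, y < y' implies ŷ < ŷ' and y > y' implies ŷ > ŷ'; b_ROCAUC(C) = 1/2 if this fails but for all (y, ŷ), (y', ŷ') in C, y < y' implies ŷ ≤ ŷ' and y > y' implies ŷ ≥ ŷ'; and b_ROCAUC(C) = 0 otherwise. Then b_ROCAUC(C) is a tight lower bound for ROCAUC over sub-multisets: (i) for every sub-multiset C' ⊆ C with P(C') ≥ 1 and N(C') ≥ 1, ROCAUC(C') ≥ b_ROCAUC(C); and (ii) there exists a sub-multiset C' ⊆ C with P(C') ≥ 1 and N(C') ≥ 1 such that ROCAUC(C') = b_ROCAUC(C). -/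

import Mathlib

/-- An instance value: a label (`true` = positive, i.e. `y = 1`;
`false` = negative, i.e. `y = 0`) together with a real prediction score. -/
abbrev Inst : Type := Bool × ℝ

/-- `P C`: the number of positive elements of `C`. -/
def P (C : Multiset Inst) : ℕ := (C.filter (fun c => c.1 = true)).card

/-- `N C`: the number of negative elements of `C`. -/
def N (C : Multiset Inst) : ℕ := (C.filter (fun c => c.1 = false)).card

/-- `TP C t`: the number of positives of `C` with prediction strictly above `t`. -/
noncomputable def TP (C : Multiset Inst) (t : ℝ) : ℕ :=
  (C.filter (fun c => c.1 = true ∧ t < c.2)).card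

/-- `FP C t`: the number of negatives of `C` with prediction strictly above `t`. -/
noncomputable def FP (C : Multiset Inst) (t : ℝ) : ℕ :=
  (C.filter (fun c => c.1 = false ∧ t < c.2)).card

/-- The ROC/PR supporting points `(TP, FP)` of `C`, listed in order of
decreasing threshold, for `t` ranging over the prediction values occurring in
`C` together with `t = -∞` (the latter yielding the final point `(P C, N C)`). -/
noncomputable def supportingPoints (C : Multiset Inst) : List (ℝ × ℝ) :=
  (((C.map Prod.snd).toFinset.sort (· ≤ ·)).reverse.map
    (fun t => ((TP C t : ℝ), (FP C t : ℝ)))) ++ [((P C : ℝ), (N C : ℝ))]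

/-- The trapezoidal sum `Σ_{i=2}^{k} |FP_i − FP_{i−1}| · (TP_i + TP_{i−1})/2`
over a list of `(TP, FP)` points. -/
noncomputable def trapROC : List (ℝ × ℝ) → ℝ
  | [] => 0
  | [_] => 0
  | a :: b :: l => |b.2 - a.2| * (b.1 + a.1) / 2 + trapROC (b :: l)

/-- The area under the ROC curve of `C` (defined whenever `P C ≥ 1` and `N C ≥ 1`). -/
noncomputable def ROCAUC (C : Multiset Inst) : ℝ :=
  trapROC (supportingPoints C) / ((P C : ℝ) * (N C : ℝ))

/-- The trapezoidal sum `Σ_{i=2}^{k} |TP_i − TP_{i−1}| ·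
(TP_i/(TP_i+FP_i) + TP_{i−1}/(TP_{i−1}+FP_{i−1}))/2` over a list of `(TP, FP)`
points; in `ℝ`, division by zero yields `0`, realizing the convention `0/0 = 0`. -/
noncomputable def trapPR : List (ℝ × ℝ) → ℝ
  | [] => 0
  | [_] => 0
  | a :: b :: l =>
      |b.1 - a.1| * (b.1 / (b.1 + b.2) + a.1 / (a.1 + a.2)) / 2 + trapPR (b :: l)

/-- The (linearly interpolated) area under the PR curve of `C`
(defined whenever `P C ≥ 1`). -/
noncomputable def PRAUC (C : Multiset Inst) : ℝ :=
  trapPR (supportingPoints C) / (P C : ℝ)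

open Classical in
/-- The lower bound `b_ROCAUC`: `1` on perfect predictions, `1/2` on perfect
predictions with ties, and `0` otherwise.  (On `Bool`, `false < true`
corresponds to `y < y'` for labels `y, y' ∈ {0, 1}`.) -/
noncomputable def bROCAUC (C : Multiset Inst) : ℝ :=
  if ∀ c ∈ C, ∀ c' ∈ C, (c.1 < c'.1 → c.2 < c'.2) ∧ (c'.1 < c.1 → c'.2 < c.2) then 1
  else if ∀ c ∈ C, ∀ c' ∈ C, (c.1 < c'.1 → c.2 ≤ c'.2) ∧ (c'.1 < c.1 → c'.2 ≤ c.2) then 1/2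
  else 0


section AuxLemmasForStatement6

section Helpers

variable {C' : Multiset Inst}

lemma FP_split (C' : Multiset Inst) {t t' : ℝ} (h : t' ≤ t) :
    FP C' t' = FP C' t +
      (C'.filter (fun c => ¬ t < c.2 ∧ c.1 = false ∧ t' < c.2)).card := by
  classical
  have h0 := Multiset.filter_add_not (fun c : Inst => t < c.2)
      (C'.filter (fun c => c.1 = false ∧ t' < c.2))
  rw [Multiset.filter_filter, Multiset.filter_filter] at h0
  have h1 : C'.filter (fun c => t < c.2 ∧ c.1 = false ∧ t' < c.2)
      = C'.filter (fun c => c.1 = false ∧ t < c.2) := by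
    apply Multiset.filter_congr
    intro x _
    constructor
    · rintro ⟨ha, hb, _⟩; exact ⟨hb, ha⟩
    · rintro ⟨hb, ha⟩; exact ⟨ha, hb, lt_of_le_of_lt h ha⟩
  rw [h1] at h0
  unfold FP
  rw [← h0, Multiset.card_add]

lemma FP_mono (C' : Multiset Inst) {t t' : ℝ} (h : t' ≤ t) : FP C' t ≤ FP C' t' := by
  rw [FP_split C' h]; exact Nat.le_add_right _ _

lemma FP_witness (C' : Multiset Inst) {t t' : ℝ} (h : t' ≤ t) (hlt : FP C' t < FP C' t') :
    ∃ n ∈ C', n.1 = false ∧ t' < n.2 ∧ n.2 ≤ t := by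
  rw [FP_split C' h] at hlt
  have hc : 0 < (C'.filter (fun c => ¬ t < c.2 ∧ c.1 = false ∧ t' < c.2)).card := by omega
  obtain ⟨n, hn⟩ := Multiset.card_pos_iff_exists_mem.mp hc
  rw [Multiset.mem_filter] at hn
  exact ⟨n, hn.1, hn.2.2.1, hn.2.2.2, not_lt.mp hn.2.1⟩

lemma TP_eq_P (C' : Multiset Inst) {t : ℝ} (h : ∀ p ∈ C', p.1 = true → t < p.2) :
    TP C' t = P C' := by
  unfold TP P
  congr 1
  apply Multiset.filter_congr
  intro x hx
  exact ⟨fun h' => h'.1, fun h' => ⟨h', h x hx h'⟩⟩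

lemma FP_eq_N (C' : Multiset Inst) {t : ℝ} (h : ∀ p ∈ C', p.1 = false → t < p.2) :
    FP C' t = N C' := by
  unfold FP N
  congr 1
  apply Multiset.filter_congr
  intro x hx
  exact ⟨fun h' => h'.1, fun h' => ⟨h', h x hx h'⟩⟩

lemma FP_eq_zero (C' : Multiset Inst) {t : ℝ} (h : ∀ n ∈ C', n.1 = false → ¬ t < n.2) :
    FP C' t = 0 := by
  unfold FP
  rw [Multiset.card_eq_zero, Multiset.filter_eq_nil]
  intro a ha hc
  exact h a ha hc.1 hc.2

lemma chain'_between {l : List ℝ} (hl : l.Pairwise (· < ·)) :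
    l.Chain' (fun a b => a < b ∧ ∀ s ∈ l, a < s → b ≤ s) := by
  rw [List.Chain', List.isChain_iff_getElem]
  intro i hi
  have hmono : StrictMono l.get := hl.sortedLT.strictMono_get
  refine ⟨hmono (by simp [Fin.lt_def]), ?_⟩
  intro s hs has
  obtain ⟨j, hj⟩ := List.mem_iff_get.mp hs
  subst hj
  have hij : (⟨i, by omega⟩ : Fin l.length) < j := hmono.lt_iff_lt.mp has
  have hle : (⟨i + 1, by omega⟩ : Fin l.length) ≤ j := by
    rw [Fin.le_def]; rw [Fin.lt_def] at hij; simpa using hij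
  exact hmono.monotone hle

lemma trap_ge (K : ℝ) : ∀ (L : List (ℝ × ℝ)),
    L.Chain' (fun a b => a.2 ≤ b.2 ∧ (a.2 < b.2 → K ≤ (b.1 + a.1) / 2)) →
    ∀ x y : ℝ × ℝ, L.head? = some x → L.getLast? = some y →
    K * (y.2 - x.2) ≤ trapROC L
  | [], _, x, y, hx, hy => by simp at hx
  | [a], _, x, y, hx, hy => by
    simp at hx hy
    subst hx; subst hy
    simp [trapROC]
  | a :: b :: l, h, x, y, hx, hy => by
    rw [List.Chain', List.isChain_cons_cons] at h
    obtain ⟨⟨hle, havg⟩, hchain⟩ := h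
    simp only [List.head?_cons, Option.some_inj] at hx
    subst hx
    rw [List.getLast?_cons_cons] at hy
    have ih := trap_ge K (b :: l) hchain b y rfl hy
    simp only [trapROC]
    rcases eq_or_lt_of_le hle with heq | hlt
    · rw [show a.2 = b.2 from heq]
      simp only [sub_self, abs_zero, zero_mul, zero_div, zero_add]
      exact ih
    · have h2 := havg hlt
      have habs : |b.2 - a.2| = b.2 - a.2 := abs_of_nonneg (by linarith)
      rw [habs]
      have hmul : (b.2 - a.2) * K ≤ (b.2 - a.2) * ((b.1 + a.1) / 2) :=
        mul_le_mul_of_nonneg_left h2 (by linarith)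
      linarith [ih, hmul]

lemma trap_nonneg : ∀ (L : List (ℝ × ℝ)), (∀ p ∈ L, 0 ≤ p.1) → 0 ≤ trapROC L
  | [], _ => le_refl 0
  | [a], _ => le_refl 0
  | a :: b :: l, h => by
    simp only [trapROC]
    have ih := trap_nonneg (b :: l) (fun p hp => h p (List.mem_cons_of_mem a hp))
    have ha : 0 ≤ a.1 := h a (by simp)
    have hb : 0 ≤ b.1 := h b (by simp)
    positivity

end Helpers

section MainBound

lemma trap_lower (C' : Multiset Inst) (hne : C' ≠ 0) (K : ℝ)
    (H : ∀ t t' : ℝ, t' < t → (∃ n ∈ C', n.1 = false ∧ n.2 = t) →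
         K ≤ ((TP C' t' : ℝ) + (TP C' t : ℝ)) / 2) :
    K * (N C' : ℝ) ≤ trapROC (supportingPoints C') := by
  classical
  have hFne : (C'.map Prod.snd).toFinset.Nonempty := by
    rw [Multiset.toFinset_nonempty]
    simpa using hne
  have hlne : (C'.map Prod.snd).toFinset.sort (· ≤ ·) ≠ [] := by
    have h1 : ((C'.map Prod.snd).toFinset.sort (· ≤ ·)).length
        = (C'.map Prod.snd).toFinset.card := Finset.length_sort _
    have h2 := Finset.card_pos.mpr hFne
    intro h0
    rw [h0] at h1
    simp at h1
    omega
  have hmemF : ∀ c ∈ C', c.2 ∈ (C'.map Prod.snd).toFinset := fun c hc => by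
    rw [Multiset.mem_toFinset]; exact Multiset.mem_map_of_mem _ hc
  have hmlt : ∀ c ∈ C', (C'.map Prod.snd).toFinset.min' hFne - 1 < c.2 := fun c hc =>
    lt_of_lt_of_le (by linarith) (Finset.min'_le _ _ (hmemF c hc))
  have hTPm : TP C' ((C'.map Prod.snd).toFinset.min' hFne - 1) = P C' :=
    TP_eq_P C' (fun p hp _ => hmlt p hp)
  have hFPm : FP C' ((C'.map Prod.snd).toFinset.min' hFne - 1) = N C' :=
    FP_eq_N C' (fun p hp _ => hmlt p hp)
  have hsp : supportingPoints C'
      = (((C'.map Prod.snd).toFinset.sort (· ≤ ·)).reverse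
          ++ [(C'.map Prod.snd).toFinset.min' hFne - 1]).map
          (fun t => ((TP C' t : ℝ), (FP C' t : ℝ))) := by
    rw [List.map_append, supportingPoints]
    simp only [List.map_cons, List.map_nil, hTPm, hFPm]
  -- chain on sorted ascending thresholds, with membership in the finset
  have hchainl : ((C'.map Prod.snd).toFinset.sort (· ≤ ·)).Chain'
      (fun a b => a < b ∧ ∀ s ∈ (C'.map Prod.snd).toFinset, a < s → b ≤ s) := by
    apply (chain'_between (((C'.map Prod.snd).toFinset.sortedLT_sort).pairwise)).imp
    intro a b hab
    exact ⟨hab.1, fun s hs => hab.2 s ((Finset.mem_sort _).mpr hs)⟩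
  -- reverse
  have hchainD : (((C'.map Prod.snd).toFinset.sort (· ≤ ·)).reverse).Chain'
      (fun a b => b < a ∧ ∀ s ∈ (C'.map Prod.snd).toFinset, b < s → a ≤ s) := by
    rw [List.Chain', List.isChain_reverse]
    exact hchainl.imp (fun a b hab => hab)
  -- append the virtual threshold min - 1
  have hheadl : ((C'.map Prod.snd).toFinset.sort (· ≤ ·)).head hlne
      = (C'.map Prod.snd).toFinset.min' hFne := by
    rw [List.head_eq_getElem]
    exact Finset.sorted_zero_eq_min'
  have hchainE : ((((C'.map Prod.snd).toFinset.sort (· ≤ ·)).reverse)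
        ++ [(C'.map Prod.snd).toFinset.min' hFne - 1]).Chain'
      (fun a b => b < a ∧ ∀ s ∈ (C'.map Prod.snd).toFinset, b < s → a ≤ s) := by
    apply hchainD.append (List.isChain_singleton _)
    intro x hx y hy
    simp only [List.getLast?_reverse, List.head?_eq_head hlne, Option.mem_def,
      Option.some_inj, List.head?_cons] at hx hy
    subst hx; subst hy
    rw [hheadl]
    exact ⟨by linarith, fun s hs _ => Finset.min'_le _ _ hs⟩
  -- map to points
  have hchainL : ((((C'.map Prod.snd).toFinset.sort (· ≤ ·)).reverse
          ++ [(C'.map Prod.snd).toFinset.min' hFne - 1]).map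
          (fun t => ((TP C' t : ℝ), (FP C' t : ℝ)))).Chain'
      (fun a b => a.2 ≤ b.2 ∧ (a.2 < b.2 → K ≤ (b.1 + a.1) / 2)) := by
    rw [List.Chain', List.isChain_map]
    apply hchainE.imp
    rintro a b ⟨hba, hbet⟩
    constructor
    · show (FP C' a : ℝ) ≤ (FP C' b : ℝ)
      exact_mod_cast FP_mono C' hba.le
    · intro hlt
      have hlt0 : (FP C' a : ℝ) < (FP C' b : ℝ) := hlt
      have hlt' : FP C' a < FP C' b := by exact_mod_cast hlt0
      obtain ⟨n, hnC, hneg, hbn, hna⟩ := FP_witness C' hba.le hlt'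
      have hna' : n.2 = a := le_antisymm hna (hbet n.2 (hmemF n hnC) hbn)
      exact H a b hba ⟨n, hnC, hneg, hna'⟩
  -- apply the trapezoid bound
  have hLne : ((((C'.map Prod.snd).toFinset.sort (· ≤ ·)).reverse
          ++ [(C'.map Prod.snd).toFinset.min' hFne - 1]).map
          (fun t => ((TP C' t : ℝ), (FP C' t : ℝ)))) ≠ [] := by simp
  have hgetlastl : ((C'.map Prod.snd).toFinset.sort (· ≤ ·)).getLast hlne
      = (C'.map Prod.snd).toFinset.max' hFne := by
    rw [List.getLast_eq_getElem]
    exact Finset.sorted_last_eq_max'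
  have hFPmax : FP C' (((C'.map Prod.snd).toFinset.sort (· ≤ ·)).getLast hlne) = 0 := by
    apply FP_eq_zero
    intro n hn _
    rw [hgetlastl, not_lt]
    exact Finset.le_max' _ _ (hmemF n hn)
  have hhead? : ((((C'.map Prod.snd).toFinset.sort (· ≤ ·)).reverse
          ++ [(C'.map Prod.snd).toFinset.min' hFne - 1]).map
          (fun t => ((TP C' t : ℝ), (FP C' t : ℝ)))).head?
      = some ((TP C' (((C'.map Prod.snd).toFinset.sort (· ≤ ·)).getLast hlne) : ℝ),
         (FP C' (((C'.map Prod.snd).toFinset.sort (· ≤ ·)).getLast hlne) : ℝ)) := by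
    rw [List.head?_map, List.head?_append, List.head?_reverse,
      List.getLast?_eq_getLast hlne]
    simp
  have hlast? : ((((C'.map Prod.snd).toFinset.sort (· ≤ ·)).reverse
          ++ [(C'.map Prod.snd).toFinset.min' hFne - 1]).map
          (fun t => ((TP C' t : ℝ), (FP C' t : ℝ)))).getLast?
      = some ((TP C' ((C'.map Prod.snd).toFinset.min' hFne - 1) : ℝ),
         (FP C' ((C'.map Prod.snd).toFinset.min' hFne - 1) : ℝ)) := by
    rw [List.getLast?_map, List.getLast?_append]
    simp
  have hbound := trap_ge K _ hchainL _ _ hhead? hlast?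
  rw [hFPmax, hFPm] at hbound
  rw [hsp]
  simpa using hbound

end MainBound

section Pairs

lemma exists_pos {C : Multiset Inst} (h : 1 ≤ P C) : ∃ p ∈ C, p.1 = true := by
  have : 0 < (C.filter (fun c => c.1 = true)).card := h
  obtain ⟨a, ha⟩ := Multiset.card_pos_iff_exists_mem.mp this
  rw [Multiset.mem_filter] at ha
  exact ⟨a, ha.1, ha.2⟩

lemma exists_neg {C : Multiset Inst} (h : 1 ≤ N C) : ∃ n ∈ C, n.1 = false := by
  have : 0 < (C.filter (fun c => c.1 = false)).card := h
  obtain ⟨a, ha⟩ := Multiset.card_pos_iff_exists_mem.mp this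
  rw [Multiset.mem_filter] at ha
  exact ⟨a, ha.1, ha.2⟩

lemma ne_zero_of_P {C : Multiset Inst} (h : 1 ≤ P C) : C ≠ 0 := by
  obtain ⟨p, hp, -⟩ := exists_pos h
  exact fun h0 => by simp [h0] at hp

lemma pair_le {C : Multiset Inst} {p n : Inst} (hp : p ∈ C) (hn : n ∈ C) (hne : p ≠ n) :
    (p ::ₘ {n}) ≤ C := by
  rw [Multiset.le_iff_count]
  intro a
  rw [Multiset.count_cons, Multiset.count_singleton]
  by_cases hap : a = p
  · subst hap
    rw [if_neg hne, if_pos rfl]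
    simpa using Multiset.one_le_count_iff_mem.mpr hp
  · rw [if_neg hap]
    by_cases han : a = n
    · subst han
      simpa using Multiset.one_le_count_iff_mem.mpr hn
    · simp [han]

variable {p n : Inst}

lemma P_pair (hp : p.1 = true) (hn : n.1 = false) : P (p ::ₘ {n}) = 1 := by
  simp [P, Multiset.filter_cons, Multiset.filter_singleton, hp, hn]

lemma N_pair (hp : p.1 = true) (hn : n.1 = false) : N (p ::ₘ {n}) = 1 := by
  simp [N, Multiset.filter_cons, Multiset.filter_singleton, hp, hn]

lemma TP_pair (hp : p.1 = true) (hn : n.1 = false) (t : ℝ) :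
    TP (p ::ₘ {n}) t = if t < p.2 then 1 else 0 := by
  rw [TP, Multiset.filter_cons, Multiset.filter_singleton]
  by_cases h : t < p.2
  · rw [if_pos ⟨hp, h⟩, if_neg (by simp [hn]), if_pos h]; simp
  · rw [if_neg (fun hc => h hc.2), if_neg (by simp [hn]), if_neg h]; simp

lemma FP_pair (hp : p.1 = true) (hn : n.1 = false) (t : ℝ) :
    FP (p ::ₘ {n}) t = if t < n.2 then 1 else 0 := by
  rw [FP, Multiset.filter_cons, Multiset.filter_singleton]
  by_cases h : t < n.2
  · rw [if_neg (by simp [hp]), if_pos ⟨hn, h⟩, if_pos h]; simp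
  · rw [if_neg (by simp [hp]), if_neg (fun hc => h hc.2), if_neg h]; simp

lemma sort_pair {a b : ℝ} (h : a < b) : ({a, b} : Finset ℝ).sort (· ≤ ·) = [a, b] := by
  have h1 : ∀ c ∈ ({b} : Finset ℝ), a ≤ c := by
    intro c hc; rw [Finset.mem_singleton] at hc; subst hc; exact h.le
  have h2 : a ∉ ({b} : Finset ℝ) := by simp [ne_of_lt h]
  rw [show ({a, b} : Finset ℝ) = insert a {b} from rfl, Finset.sort_insert _ h1 h2,
    Finset.sort_singleton]

lemma toFinset_pair : ((p ::ₘ {n} : Multiset Inst).map Prod.snd).toFinset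
    = {p.2, n.2} := by
  simp [Multiset.toFinset_cons, Multiset.toFinset_singleton]

lemma ROCAUC_pair_gt (hp : p.1 = true) (hn : n.1 = false) (h : n.2 < p.2) :
    ROCAUC (p ::ₘ {n}) = 1 := by
  have hsort : ((p ::ₘ {n} : Multiset Inst).map Prod.snd).toFinset.sort (· ≤ ·)
      = [n.2, p.2] := by
    rw [toFinset_pair, Finset.pair_comm, sort_pair h]
  rw [ROCAUC, supportingPoints, hsort, P_pair hp hn, N_pair hp hn]
  simp only [List.reverse_cons, List.reverse_nil, List.nil_append, List.cons_append,
    List.map_cons, List.map_nil, TP_pair hp hn, FP_pair hp hn]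
  rw [if_neg (lt_irrefl _), if_neg (by linarith), if_pos h, if_neg (lt_irrefl _)]
  simp only [trapROC]
  norm_num

lemma ROCAUC_pair_eq (hp : p.1 = true) (hn : n.1 = false) (h : n.2 = p.2) :
    ROCAUC (p ::ₘ {n}) = 1 / 2 := by
  have hsort : ((p ::ₘ {n} : Multiset Inst).map Prod.snd).toFinset.sort (· ≤ ·)
      = [p.2] := by
    rw [toFinset_pair, h, show ({p.2, p.2} : Finset ℝ) = {p.2} by simp,
      Finset.sort_singleton]
  rw [ROCAUC, supportingPoints, hsort, P_pair hp hn, N_pair hp hn]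
  simp only [List.reverse_cons, List.reverse_nil, List.nil_append, List.cons_append,
    List.map_cons, List.map_nil, TP_pair hp hn, FP_pair hp hn]
  rw [if_neg (lt_irrefl _), if_neg (by rw [h]; exact lt_irrefl _)]
  simp only [trapROC]
  norm_num

lemma ROCAUC_pair_lt (hp : p.1 = true) (hn : n.1 = false) (h : p.2 < n.2) :
    ROCAUC (p ::ₘ {n}) = 0 := by
  have hsort : ((p ::ₘ {n} : Multiset Inst).map Prod.snd).toFinset.sort (· ≤ ·)
      = [p.2, n.2] := by
    rw [toFinset_pair, sort_pair h]
  rw [ROCAUC, supportingPoints, hsort, P_pair hp hn, N_pair hp hn]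
  simp only [List.reverse_cons, List.reverse_nil, List.nil_append, List.cons_append,
    List.map_cons, List.map_nil, TP_pair hp hn, FP_pair hp hn]
  rw [if_neg (lt_irrefl _), if_neg (by linarith), if_neg (lt_irrefl _), if_pos h]
  simp only [trapROC]
  norm_num

end Pairs

section NonNeg

lemma sp_fst_nonneg (C' : Multiset Inst) : ∀ q ∈ supportingPoints C', 0 ≤ q.1 := by
  intro q hq
  rw [supportingPoints, List.mem_append] at hq
  rcases hq with hq | hq
  · obtain ⟨t, -, rfl⟩ := List.mem_map.mp hq
    positivity
  · rw [List.mem_singleton] at hq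
    rw [hq]
    positivity

lemma ROCAUC_nonneg (C' : Multiset Inst) : 0 ≤ ROCAUC C' :=
  div_nonneg (trap_nonneg _ (sp_fst_nonneg C')) (by positivity)

end NonNeg


end AuxLemmasForStatement6

/-- `b_ROCAUC C` is a tight lower bound for the ROC AUC over
sub-multisets of `C`. -/
theorem bROCAUC_tight_lower_bound (C : Multiset Inst)
    (hP : 1 ≤ P C) (hN : 1 ≤ N C) :
    (∀ C' ≤ C, 1 ≤ P C' → 1 ≤ N C' → bROCAUC C ≤ ROCAUC C') ∧
    (∃ C' ≤ C, 1 ≤ P C' ∧ 1 ≤ N C' ∧ ROCAUC C' = bROCAUC C) := by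
  classical
  constructor
  · intro C' hC' hP' hN'
    have hne : C' ≠ 0 := ne_zero_of_P hP'
    have hPpos : (0:ℝ) < (P C' : ℝ) := by exact_mod_cast hP'
    have hNpos : (0:ℝ) < (N C' : ℝ) := by exact_mod_cast hN'
    have hPN : (0:ℝ) < (P C' : ℝ) * (N C' : ℝ) := mul_pos hPpos hNpos
    rw [bROCAUC]
    split_ifs with h1 h2
    · rw [ROCAUC, le_div_iff₀ hPN, one_mul]
      have hH : ∀ t t' : ℝ, t' < t → (∃ m ∈ C', m.1 = false ∧ m.2 = t) →
          (P C' : ℝ) ≤ ((TP C' t' : ℝ) + (TP C' t : ℝ)) / 2 := by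
        rintro t t' htt' ⟨m, hmC, hmneg, hmt⟩
        have key : ∀ q ∈ C', q.1 = true → t < q.2 := by
          intro q hq hqt
          have hlt := (h1 m (Multiset.mem_of_le hC' hmC) q (Multiset.mem_of_le hC' hq)).1
          rw [hmneg, hqt] at hlt
          rw [← hmt]
          exact hlt Bool.false_lt_true
        have key' : ∀ q ∈ C', q.1 = true → t' < q.2 := fun q hq hqt =>
          lt_trans htt' (key q hq hqt)
        rw [TP_eq_P C' key, TP_eq_P C' key']
        linarith
      have hlow := trap_lower C' hne (P C' : ℝ) hH
      linarith
    · rw [ROCAUC, le_div_iff₀ hPN]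
      have hH : ∀ t t' : ℝ, t' < t → (∃ m ∈ C', m.1 = false ∧ m.2 = t) →
          (P C' : ℝ) / 2 ≤ ((TP C' t' : ℝ) + (TP C' t : ℝ)) / 2 := by
        rintro t t' htt' ⟨m, hmC, hmneg, hmt⟩
        have key' : ∀ q ∈ C', q.1 = true → t' < q.2 := by
          intro q hq hqt
          have hle := (h2 m (Multiset.mem_of_le hC' hmC) q (Multiset.mem_of_le hC' hq)).1
          rw [hmneg, hqt] at hle
          have hle' := hle Bool.false_lt_true
          exact lt_of_lt_of_le htt' (hmt ▸ hle')
        rw [TP_eq_P C' key']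
        have h0 : (0:ℝ) ≤ (TP C' t : ℝ) := by positivity
        linarith
      have hlow := trap_lower C' hne ((P C' : ℝ) / 2) hH
      have heq : 1 / 2 * ((P C' : ℝ) * (N C' : ℝ)) = (P C' : ℝ) / 2 * (N C' : ℝ) := by
        ring
      rw [heq]
      exact hlow
    · exact ROCAUC_nonneg C'
  · obtain ⟨p, hpC, hp⟩ := exists_pos hP
    obtain ⟨n, hnC, hn⟩ := exists_neg hN
    by_cases h1 : ∀ c ∈ C, ∀ c' ∈ C, (c.1 < c'.1 → c.2 < c'.2) ∧ (c'.1 < c.1 → c'.2 < c.2)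
    · have hpn : p ≠ n := by intro h; rw [h, hn] at hp; cases hp
      refine ⟨p ::ₘ {n}, pair_le hpC hnC hpn, le_of_eq (P_pair hp hn).symm,
        le_of_eq (N_pair hp hn).symm, ?_⟩
      rw [bROCAUC, if_pos h1]
      apply ROCAUC_pair_gt hp hn
      have hlt := (h1 n hnC p hpC).1
      rw [hn, hp] at hlt
      exact hlt Bool.false_lt_true
    · by_cases h2 : ∀ c ∈ C, ∀ c' ∈ C, (c.1 < c'.1 → c.2 ≤ c'.2) ∧ (c'.1 < c.1 → c'.2 ≤ c.2)
      · -- strict fails but weak holds: there is a tie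
        have h1o := h1
        push_neg at h1
        obtain ⟨c, hc, c', hc', himp⟩ := h1
        have key : ∃ q ∈ C, ∃ m ∈ C, q.1 = true ∧ m.1 = false ∧ m.2 = q.2 := by
          by_cases hA : c.1 < c'.1 → c.2 < c'.2
          · obtain ⟨hlt, hge⟩ := himp hA
            obtain ⟨hcf, hct⟩ := Bool.lt_iff.mp hlt
            exact ⟨c, hc, c', hc', hct, hcf,
              le_antisymm ((h2 c' hc' c hc).1 hlt) hge⟩
          · rw [Classical.not_imp] at hA
            obtain ⟨hlt, hge⟩ := hA
            obtain ⟨hcf, hct⟩ := Bool.lt_iff.mp hlt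
            exact ⟨c', hc', c, hc, hct, hcf,
              le_antisymm ((h2 c hc c' hc').1 hlt) (not_lt.mp hge)⟩
        obtain ⟨q, hqC, m, hmC, hq, hm, hqm⟩ := key
        have hqmne : q ≠ m := by intro h; rw [h, hm] at hq; cases hq
        refine ⟨q ::ₘ {m}, pair_le hqC hmC hqmne, le_of_eq (P_pair hq hm).symm,
          le_of_eq (N_pair hq hm).symm, ?_⟩
        rw [bROCAUC, if_neg h1o, if_pos h2]
        exact ROCAUC_pair_eq hq hm hqm
      · -- weak fails: there is an inversion
        push_neg at h2
        obtain ⟨c, hc, c', hc', himp⟩ := h2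
        have key : ∃ q ∈ C, ∃ m ∈ C, q.1 = true ∧ m.1 = false ∧ q.2 < m.2 := by
          by_cases hA : c.1 < c'.1 → c.2 ≤ c'.2
          · obtain ⟨hlt, hgt⟩ := himp hA
            obtain ⟨hcf, hct⟩ := Bool.lt_iff.mp hlt
            exact ⟨c, hc, c', hc', hct, hcf, hgt⟩
          · rw [Classical.not_imp] at hA
            obtain ⟨hlt, hgt⟩ := hA
            obtain ⟨hcf, hct⟩ := Bool.lt_iff.mp hlt
            exact ⟨c', hc', c, hc, hct, hcf, not_le.mp hgt⟩
        obtain ⟨q, hqC, m, hmC, hq, hm, hqm⟩ := key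
        have hqmne : q ≠ m := by intro h; rw [h, hm] at hq; cases hq
        refine ⟨q ::ₘ {m}, pair_le hqC hmC hqmne, le_of_eq (P_pair hq hm).symm,
          le_of_eq (N_pair hq hm).symm, ?_⟩
        have h2' : ¬ ∀ c ∈ C, ∀ c' ∈ C,
            (c.1 < c'.1 → c.2 ≤ c'.2) ∧ (c'.1 < c.1 → c'.2 ≤ c.2) := by
          intro hall
          obtain ⟨hlt', hgt'⟩ := himp (hall c hc c' hc').1
          exact absurd ((hall c hc c' hc').2 hlt') (not_le.mpr hgt')
        have h1' : ¬ ∀ c ∈ C, ∀ c' ∈ C,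
            (c.1 < c'.1 → c.2 < c'.2) ∧ (c'.1 < c.1 → c'.2 < c.2) := by
          intro hall
          exact h2' (fun a ha b hb =>
            ⟨fun h => ((hall a ha b hb).1 h).le, fun h => ((hall a ha b hb).2 h).le⟩)
        rw [bROCAUC, if_neg h1', if_neg h2']
        exact ROCAUC_pair_lt hq hm hqm
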